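/- Consider a sequential L-layer network X⁰ = X, Xˡ = aₗ(Xˡ⁻¹ Wˡ + bˡ) with weight matrices Wˡ, biases bˡ (added row-wise), and element-wise activations aₗ each with Lipschitz constant Aₗ. Let Ŵˡ be perturbed weights, X̂ˡ the correspondingly perturbed activations (X̂⁰ = X), and define εₗ = ‖Xˡ⁻¹ Wˡ − Xˡ⁻¹ Ŵˡ‖_F. Then ‖X^L − X̂^L‖_F ≤ Σ_{l=1}^L [ Aₗ εₗ · Π_{i=l+1}^L ‖Ŵⁱ‖₂ Aᵢ ], where ‖·‖₂ is the spectral norm and the empty product equals 1. -/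

import Mathlib

open Matrix
open scoped Matrix.Norms.L2Operator

/-- Frobenius norm of a matrix. -/
noncomputable def frobNorm {m n : Type*} [Fintype m] [Fintype n] (A : Matrix m n ℝ) : ℝ :=
  Real.sqrt (∑ i, ∑ j, (A i j) ^ 2)

/-- Spectral (operator 2-) norm of a matrix: the operator norm of the induced linear map
between Euclidean spaces. -/
noncomputable def specNorm {m n : ℕ} (A : Matrix (Fin m) (Fin n) ℝ) : ℝ :=
  ‖LinearMap.toContinuousLinearMap (Matrix.toEuclideanLin (𝕜 := ℝ) A)‖

lemma specNorm_eq {m n : ℕ} (A : Matrix (Fin m) (Fin n) ℝ) : specNorm A = ‖A‖ := rfl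

lemma specNorm_nonneg {m n : ℕ} (A : Matrix (Fin m) (Fin n) ℝ) : 0 ≤ specNorm A :=
  norm_nonneg _

lemma frobNorm_nonneg {m n : Type*} [Fintype m] [Fintype n] (A : Matrix m n ℝ) :
    0 ≤ frobNorm A := Real.sqrt_nonneg _

lemma frobNorm_eq_norm {m n : Type*} [Fintype m] [Fintype n] (A : Matrix m n ℝ) :
    frobNorm A = ‖((WithLp.equiv 2 ((m × n) → ℝ)).symm fun p => A p.1 p.2)‖ := by
  rw [EuclideanSpace.norm_eq, frobNorm]
  congr 1
  rw [Fintype.sum_prod_type]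
  simp [sq_abs]

lemma frobNorm_add_le {m n : Type*} [Fintype m] [Fintype n] (X Y : Matrix m n ℝ) :
    frobNorm (X + Y) ≤ frobNorm X + frobNorm Y := by
  rw [frobNorm_eq_norm, frobNorm_eq_norm, frobNorm_eq_norm]
  have : ((WithLp.equiv 2 ((m × n) → ℝ)).symm fun p => (X + Y) p.1 p.2)
      = ((WithLp.equiv 2 ((m × n) → ℝ)).symm fun p => X p.1 p.2)
        + ((WithLp.equiv 2 ((m × n) → ℝ)).symm fun p => Y p.1 p.2) := rfl
  rw [this]
  exact norm_add_le _ _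

lemma frobNorm_map_sub_le {m n : Type*} [Fintype m] [Fintype n]
    (f : ℝ → ℝ) (c : ℝ) (hc : 0 ≤ c) (hf : ∀ x y, |f x - f y| ≤ c * |x - y|)
    (M N : Matrix m n ℝ) :
    frobNorm (M.map f - N.map f) ≤ c * frobNorm (M - N) := by
  rw [frobNorm, frobNorm, ← Real.sqrt_sq hc, ← Real.sqrt_mul (sq_nonneg c)]
  apply Real.sqrt_le_sqrt
  rw [Finset.mul_sum]
  refine Finset.sum_le_sum fun i _ => ?_
  rw [Finset.mul_sum]
  refine Finset.sum_le_sum fun j _ => ?_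
  have h1 : ((M.map f - N.map f) i j) ^ 2 = |f (M i j) - f (N i j)| ^ 2 := by
    simp [Matrix.sub_apply, Matrix.map_apply, sq_abs]
  have h2 : c ^ 2 * ((M - N) i j) ^ 2 = (c * |M i j - N i j|) ^ 2 := by
    rw [mul_pow, sq_abs]; simp [Matrix.sub_apply]
  rw [h1, h2]
  exact pow_le_pow_left₀ (abs_nonneg _) (hf _ _) 2

lemma frobNorm_mul_le {B m n : ℕ} (M : Matrix (Fin B) (Fin m) ℝ)
    (P : Matrix (Fin m) (Fin n) ℝ) :
    frobNorm (M * P) ≤ frobNorm M * specNorm P := by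
  have hspec := specNorm_nonneg P
  rw [frobNorm, frobNorm, ← Real.sqrt_sq hspec, ← Real.sqrt_mul' _ (sq_nonneg _)]
  apply Real.sqrt_le_sqrt
  rw [Finset.sum_mul]
  refine Finset.sum_le_sum fun i _ => ?_
  -- row i of M * P equals Pᴴ *ᵥ (M i)
  set x : EuclideanSpace ℝ (Fin m) := (WithLp.equiv 2 (Fin m → ℝ)).symm (M i) with hx
  have key : ∑ j, ((M * P) i j) ^ 2
      = ‖(EuclideanSpace.equiv (Fin n) ℝ).symm <| Pᴴ *ᵥ (WithLp.equiv 2 (Fin m → ℝ)) x‖ ^ 2 := by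
    rw [EuclideanSpace.norm_eq, Real.sq_sqrt (by positivity)]
    refine Finset.sum_congr rfl fun j _ => ?_
    have hentry : ((M * P) i j) = (Pᴴ *ᵥ (WithLp.equiv 2 (Fin m → ℝ)) x) j := by
      simp [hx, Matrix.mulVec, Matrix.mul_apply, dotProduct, mul_comm]
    rw [hentry]
    simp [EuclideanSpace.equiv, sq_abs]
  rw [key]
  have h1 : ‖(EuclideanSpace.equiv (Fin n) ℝ).symm <| Pᴴ *ᵥ (WithLp.equiv 2 (Fin m → ℝ)) x‖
      ≤ ‖Pᴴ‖ * ‖x‖ := Matrix.l2_opNorm_mulVec Pᴴ x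
  have h2 : ‖Pᴴ‖ = specNorm P := by rw [Matrix.l2_opNorm_conjTranspose, specNorm_eq]
  have h3 : ‖x‖ ^ 2 = ∑ j, (M i j) ^ 2 := by
    rw [hx, EuclideanSpace.norm_eq, Real.sq_sqrt (by positivity)]
    simp [sq_abs]
  calc ‖(EuclideanSpace.equiv (Fin n) ℝ).symm <| Pᴴ *ᵥ (WithLp.equiv 2 (Fin m → ℝ)) x‖ ^ 2
      ≤ (‖Pᴴ‖ * ‖x‖) ^ 2 := by
        apply pow_le_pow_left₀ (norm_nonneg _) h1
    _ = (∑ j, (M i j) ^ 2) * specNorm P ^ 2 := by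
        rw [mul_pow, h2, h3]; ring

/-- Layerwise error-propagation bound for a sequential `L`-layer network
`X⁰ = X`, `Xˡ = aₗ(Xˡ⁻¹ Wˡ + bˡ)` with entrywise `Aₗ`-Lipschitz activations.
Layers are indexed `0, …, L-1`, so layer `l+1` of the informal statement is index `l`. -/
theorem network_output_distortion_bound
    (L B : ℕ) (D : ℕ → ℕ)
    (W Wh : (l : ℕ) → Matrix (Fin (D l)) (Fin (D (l + 1))) ℝ)
    (b : (l : ℕ) → Fin (D (l + 1)) → ℝ)
    (a : ℕ → ℝ → ℝ) (A : ℕ → ℝ) (hA0 : ∀ l, 0 ≤ A l)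
    (hLip : ∀ l x y, |a l x - a l y| ≤ A l * |x - y|)
    (X0 : Matrix (Fin B) (Fin (D 0)) ℝ)
    (Xs Xh : (l : ℕ) → Matrix (Fin B) (Fin (D l)) ℝ)
    (hX0 : Xs 0 = X0) (hXh0 : Xh 0 = X0)
    (hXs : ∀ l, Xs (l + 1) =
      (Xs l * W l + Matrix.of fun (_ : Fin B) j => b l j).map (a l))
    (hXh : ∀ l, Xh (l + 1) =
      (Xh l * Wh l + Matrix.of fun (_ : Fin B) j => b l j).map (a l)) :
    frobNorm (Xs L - Xh L) ≤
      ∑ l ∈ Finset.range L,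
        A l * frobNorm (Xs l * W l - Xs l * Wh l) *
          ∏ i ∈ Finset.Ico (l + 1) L, specNorm (Wh i) * A i := by
  induction L with
  | zero =>
    simp [hX0, hXh0, frobNorm]
  | succ L IH =>
    set S := ∑ l ∈ Finset.range L,
        A l * frobNorm (Xs l * W l - Xs l * Wh l) *
          ∏ i ∈ Finset.Ico (l + 1) L, specNorm (Wh i) * A i with hS
    have hSnn : 0 ≤ S := by
      apply Finset.sum_nonneg
      intro l _
      have : 0 ≤ ∏ i ∈ Finset.Ico (l + 1) L, specNorm (Wh i) * A i :=
        Finset.prod_nonneg fun i _ => mul_nonneg (specNorm_nonneg _) (hA0 i)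
      exact mul_nonneg (mul_nonneg (hA0 l) (frobNorm_nonneg _)) this
    -- step bound
    have hdiff : Xs (L + 1) - Xh (L + 1)
        = ((Xs L * W L + Matrix.of fun (_ : Fin B) j => b L j).map (a L))
          - ((Xh L * Wh L + Matrix.of fun (_ : Fin B) j => b L j).map (a L)) := by
      rw [hXs L, hXh L]
    have step1 : frobNorm (Xs (L + 1) - Xh (L + 1))
        ≤ A L * frobNorm (Xs L * W L - Xh L * Wh L) := by
      rw [hdiff]
      have := frobNorm_map_sub_le (a L) (A L) (hA0 L) (hLip L)
        (Xs L * W L + Matrix.of fun (_ : Fin B) j => b L j)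
        (Xh L * Wh L + Matrix.of fun (_ : Fin B) j => b L j)
      have hcancel : (Xs L * W L + Matrix.of fun (_ : Fin B) j => b L j)
          - (Xh L * Wh L + Matrix.of fun (_ : Fin B) j => b L j)
          = Xs L * W L - Xh L * Wh L := by abel
      rwa [hcancel] at this
    have split : Xs L * W L - Xh L * Wh L
        = (Xs L * W L - Xs L * Wh L) + (Xs L - Xh L) * Wh L := by
      rw [Matrix.sub_mul]; abel
    have step2 : frobNorm (Xs L * W L - Xh L * Wh L)
        ≤ frobNorm (Xs L * W L - Xs L * Wh L) + frobNorm (Xs L - Xh L) * specNorm (Wh L) := by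
      rw [split]
      refine (frobNorm_add_le _ _).trans ?_
      exact add_le_add le_rfl (frobNorm_mul_le _ _)
    have step3 : frobNorm (Xs L - Xh L) * specNorm (Wh L) ≤ S * specNorm (Wh L) :=
      mul_le_mul_of_nonneg_right IH (specNorm_nonneg _)
    have main : frobNorm (Xs (L + 1) - Xh (L + 1))
        ≤ A L * frobNorm (Xs L * W L - Xs L * Wh L) + S * (specNorm (Wh L) * A L) := by
      refine step1.trans ?_
      have := add_le_add (le_refl (frobNorm (Xs L * W L - Xs L * Wh L))) step3
      calc A L * frobNorm (Xs L * W L - Xh L * Wh L)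
          ≤ A L * (frobNorm (Xs L * W L - Xs L * Wh L) + S * specNorm (Wh L)) := by
            apply mul_le_mul_of_nonneg_left (step2.trans this) (hA0 L)
        _ = A L * frobNorm (Xs L * W L - Xs L * Wh L) + S * (specNorm (Wh L) * A L) := by ring
    refine main.trans (le_of_eq ?_)
    rw [Finset.sum_range_succ]
    have hlast : A L * frobNorm (Xs L * W L - Xs L * Wh L) *
        ∏ i ∈ Finset.Ico (L + 1) (L + 1), specNorm (Wh i) * A i
        = A L * frobNorm (Xs L * W L - Xs L * Wh L) := by
      simp
    rw [hlast, hS, Finset.sum_mul]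
    rw [add_comm]
    congr 1
    refine Finset.sum_congr rfl fun l hl => ?_
    rw [Finset.prod_Ico_succ_top (Nat.succ_le_of_lt (Finset.mem_range.mp hl))]
    ring
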